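/- Let u = (x₁,y₁,z₁) and v = (x₂,y₂,z₂) be points of ℝ³. If z₁ ≥ z₂, then u ≺ v if and only if (x₁,y₁) ∈ (x₂,y₂) + D − (z₁−z₂)·(0,p); and if z₁ < z₂, then u ≺ v if and only if (x₁,y₁) ∈ (x₂,y₂) + D − (z₁−z₂)·(1/p, 0). Consequently, for c ∈ ℝ, the cross section Δ ∩ (ℝ²×{c}) equals (D − c·(0,p)) × {c} if c ≥ 0, and equals (D − c·(1/p,0)) × {c} if c < 0. -/

import Mathlib

open Pointwise

noncomputable section

/-- The 2-dimensional cone `D = {(x,y) : x + p y ≤ 0, p² x + y ≤ 0}`. -/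
def D2 (p : ℕ) : Set (ℝ × ℝ) :=
  {w | w.1 + (p : ℝ) * w.2 ≤ 0 ∧ (p : ℝ) ^ 2 * w.1 + w.2 ≤ 0}

/-- The partial order `≺` on `ℝ²`: `u ≺ v` iff `u - v ∈ D`. -/
def prec2 (p : ℕ) (u v : ℝ × ℝ) : Prop := u - v ∈ D2 p

/-- `I` is an ideal of `Ω ⊆ ℝ²` for the order `≺`. -/
def IsIdeal2 (p : ℕ) (Ω I : Set (ℝ × ℝ)) : Prop :=
  I ⊆ Ω ∧ ∀ u ∈ I, ∀ v ∈ Ω, prec2 p v u → v ∈ I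

/-- The integer rectangle `[a,b] × [c,d]` viewed inside `ℝ²`. -/
def box (a b c d : ℤ) : Set (ℝ × ℝ) :=
  {w | ∃ x y : ℤ, w = ((x : ℝ), (y : ℝ)) ∧ a ≤ x ∧ x ≤ b ∧ c ≤ y ∧ y ≤ d}

/-- The partial order `≺` on `ℝ³` defined by the three inequalities. -/
def prec3 (p : ℕ) (u v : ℝ × ℝ × ℝ) : Prop :=
  (u.1 - v.1) + (p : ℝ) * (u.2.1 - v.2.1) + (p : ℝ) ^ 2 * (u.2.2 - v.2.2) ≤ 0 ∧
  (p : ℝ) ^ 2 * (u.1 - v.1) + (u.2.1 - v.2.1) + (p : ℝ) * (u.2.2 - v.2.2) ≤ 0 ∧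
  (p : ℝ) * (u.1 - v.1) + (p : ℝ) ^ 2 * (u.2.1 - v.2.1) + (u.2.2 - v.2.2) ≤ 0

/-- The 3-dimensional simplicial cone `Δ = {w : w ≺ 0}`. -/
def Delta3 (p : ℕ) : Set (ℝ × ℝ × ℝ) := {w | prec3 p w 0}

/-- `I` is an ideal of `Ω ⊆ ℝ³` for the order `≺`. -/
def IsIdeal3 (p : ℕ) (Ω I : Set (ℝ × ℝ × ℝ)) : Prop :=
  I ⊆ Ω ∧ ∀ u ∈ I, ∀ v ∈ Ω, prec3 p v u → v ∈ I

lemma mem_shift (v w x : ℝ × ℝ) (S : Set (ℝ × ℝ)) :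
    x ∈ {v} + S - {w} ↔ x - v + w ∈ S := by
  simp only [Set.singleton_add, Set.sub_singleton, Set.mem_image]
  constructor
  · rintro ⟨a, ⟨d, hd, rfl⟩, rfl⟩
    have e : v + d - w - v + w = d := by abel
    rwa [e]
  · intro h
    exact ⟨v + (x - v + w), ⟨_, h, rfl⟩, by abel⟩

lemma mem_shift0 (w x : ℝ × ℝ) (S : Set (ℝ × ℝ)) :
    x ∈ S - {w} ↔ x + w ∈ S := by
  simp only [Set.sub_singleton, Set.mem_image]
  constructor
  · rintro ⟨d, hd, rfl⟩
    have e : d - w + w = d := by abel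
    rwa [e]
  · intro h
    exact ⟨x + w, h, by abel⟩

lemma key1 (p : ℕ) (hp : (1 : ℝ) ≤ p) (a b t : ℝ) (ht : 0 ≤ t) :
    (a + (p : ℝ) * b + (p : ℝ) ^ 2 * t ≤ 0 ∧
     (p : ℝ) ^ 2 * a + b + (p : ℝ) * t ≤ 0 ∧
     (p : ℝ) * a + (p : ℝ) ^ 2 * b + t ≤ 0) ↔
    (a + (p : ℝ) * (b + t * p) ≤ 0 ∧ (p : ℝ) ^ 2 * a + (b + t * p) ≤ 0) := by
  have hp0 : (0 : ℝ) < p := by linarith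
  constructor
  · rintro ⟨h1, h2, h3⟩
    constructor <;> nlinarith
  · rintro ⟨h1, h2⟩
    have h1' := mul_le_mul_of_nonneg_left h1 hp0.le
    have hcube : 0 ≤ t * ((p : ℝ) ^ 3 - 1) :=
      mul_nonneg ht (by nlinarith)
    refine ⟨by nlinarith, by nlinarith, by nlinarith⟩

lemma key2 (p : ℕ) (hp : (1 : ℝ) ≤ p) (a b t : ℝ) (ht : t < 0) :
    (a + (p : ℝ) * b + (p : ℝ) ^ 2 * t ≤ 0 ∧
     (p : ℝ) ^ 2 * a + b + (p : ℝ) * t ≤ 0 ∧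
     (p : ℝ) * a + (p : ℝ) ^ 2 * b + t ≤ 0) ↔
    ((a + t * (1 / (p : ℝ))) + (p : ℝ) * b ≤ 0 ∧
     (p : ℝ) ^ 2 * (a + t * (1 / (p : ℝ))) + b ≤ 0) := by
  have hp0 : (0 : ℝ) < p := by linarith
  have hpne : (p : ℝ) ≠ 0 := ne_of_gt hp0
  have hts : t = t * (1 / (p : ℝ)) * p := by field_simp
  set s := t * (1 / (p : ℝ)) with hsdef
  have hs0 : s < 0 := mul_neg_of_neg_of_pos ht (by positivity)
  rw [hts]
  constructor
  · rintro ⟨h1, h2, h3⟩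
    constructor <;> nlinarith
  · rintro ⟨h1, h2⟩
    have h1' := mul_le_mul_of_nonneg_left h1 hp0.le
    have hcube : 0 ≤ (-s) * ((p : ℝ) ^ 3 - 1) :=
      mul_nonneg (by linarith) (by nlinarith)
    refine ⟨by nlinarith, by nlinarith, by nlinarith⟩

/-- Cross sections of the order `≺` and of the cone `Δ` on planes parallel to the
`xy`-plane. -/
theorem stmt4 (p : ℕ) (hp : p.Prime) :
    (∀ x₁ y₁ z₁ x₂ y₂ z₂ : ℝ, z₁ ≥ z₂ →
      (prec3 p (x₁, y₁, z₁) (x₂, y₂, z₂) ↔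
        (x₁, y₁) ∈ {(x₂, y₂)} + D2 p - {(z₁ - z₂) • ((0 : ℝ), (p : ℝ))})) ∧
    (∀ x₁ y₁ z₁ x₂ y₂ z₂ : ℝ, z₁ < z₂ →
      (prec3 p (x₁, y₁, z₁) (x₂, y₂, z₂) ↔
        (x₁, y₁) ∈ {(x₂, y₂)} + D2 p - {(z₁ - z₂) • (1 / (p : ℝ), (0 : ℝ))})) ∧
    (∀ c : ℝ, 0 ≤ c →
      Delta3 p ∩ {w | w.2.2 = c} =
        {w | (w.1, w.2.1) ∈ D2 p - {c • ((0 : ℝ), (p : ℝ))} ∧ w.2.2 = c}) ∧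
    (∀ c : ℝ, c < 0 →
      Delta3 p ∩ {w | w.2.2 = c} =
        {w | (w.1, w.2.1) ∈ D2 p - {c • (1 / (p : ℝ), (0 : ℝ))} ∧ w.2.2 = c}) := by
  have hp1 : (1 : ℝ) ≤ p := by exact_mod_cast hp.one_lt.le
  have main1 : ∀ x₁ y₁ z₁ x₂ y₂ z₂ : ℝ, z₁ ≥ z₂ →
      (prec3 p (x₁, y₁, z₁) (x₂, y₂, z₂) ↔
        (x₁, y₁) ∈ {(x₂, y₂)} + D2 p - {(z₁ - z₂) • ((0 : ℝ), (p : ℝ))}) := by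
    intro x₁ y₁ z₁ x₂ y₂ z₂ hz
    rw [mem_shift]
    have e : (x₁, y₁) - (x₂, y₂) + (z₁ - z₂) • ((0 : ℝ), (p : ℝ)) =
        (x₁ - x₂, y₁ - y₂ + (z₁ - z₂) * p) := by
      simp [Prod.ext_iff]
    rw [e]
    have := key1 p hp1 (x₁ - x₂) (y₁ - y₂) (z₁ - z₂) (by linarith)
    simp only [prec3, D2, Set.mem_setOf_eq]
    exact this
  have main2 : ∀ x₁ y₁ z₁ x₂ y₂ z₂ : ℝ, z₁ < z₂ →
      (prec3 p (x₁, y₁, z₁) (x₂, y₂, z₂) ↔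
        (x₁, y₁) ∈ {(x₂, y₂)} + D2 p - {(z₁ - z₂) • (1 / (p : ℝ), (0 : ℝ))}) := by
    intro x₁ y₁ z₁ x₂ y₂ z₂ hz
    rw [mem_shift]
    have e : (x₁, y₁) - (x₂, y₂) + (z₁ - z₂) • (1 / (p : ℝ), (0 : ℝ)) =
        ((x₁ - x₂) + (z₁ - z₂) * (1 / (p : ℝ)), y₁ - y₂) := by
      simp [Prod.ext_iff]
    rw [e]
    have := key2 p hp1 (x₁ - x₂) (y₁ - y₂) (z₁ - z₂) (by linarith)
    simp only [prec3, D2, Set.mem_setOf_eq]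
    exact this
  refine ⟨main1, main2, ?_, ?_⟩
  · intro c hc
    ext w
    obtain ⟨a, b, z⟩ := w
    simp only [Delta3, Set.mem_inter_iff, Set.mem_setOf_eq]
    constructor
    · rintro ⟨h, rfl⟩
      refine ⟨?_, rfl⟩
      rw [mem_shift0]
      have h2 := (main1 a b z 0 0 0 hc).mp h
      rw [mem_shift] at h2
      have e : (a, b) - ((0 : ℝ), (0 : ℝ)) + (z - 0) • ((0 : ℝ), (p : ℝ)) =
          (a, b) + z • ((0 : ℝ), (p : ℝ)) := by
        simp [Prod.ext_iff]
      rwa [e] at h2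
    · rintro ⟨h, rfl⟩
      refine ⟨?_, rfl⟩
      rw [mem_shift0] at h
      have h2 : (a, b) - ((0 : ℝ), (0 : ℝ)) + (z - 0) • ((0 : ℝ), (p : ℝ)) ∈ D2 p := by
        have e : (a, b) - ((0 : ℝ), (0 : ℝ)) + (z - 0) • ((0 : ℝ), (p : ℝ)) =
            (a, b) + z • ((0 : ℝ), (p : ℝ)) := by
          simp [Prod.ext_iff]
        rwa [e]
      rw [← mem_shift] at h2
      have := (main1 a b z 0 0 0 hc).mpr h2
      exact this
  · intro c hc
    ext w
    obtain ⟨a, b, z⟩ := w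
    simp only [Delta3, Set.mem_inter_iff, Set.mem_setOf_eq]
    constructor
    · rintro ⟨h, rfl⟩
      refine ⟨?_, rfl⟩
      rw [mem_shift0]
      have h2 := (main2 a b z 0 0 0 hc).mp h
      rw [mem_shift] at h2
      have e : (a, b) - ((0 : ℝ), (0 : ℝ)) + (z - 0) • (1 / (p : ℝ), (0 : ℝ)) =
          (a, b) + z • (1 / (p : ℝ), (0 : ℝ)) := by
        simp [Prod.ext_iff]
      rwa [e] at h2
    · rintro ⟨h, rfl⟩
      refine ⟨?_, rfl⟩
      rw [mem_shift0] at h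
      have h2 : (a, b) - ((0 : ℝ), (0 : ℝ)) + (z - 0) • (1 / (p : ℝ), (0 : ℝ)) ∈ D2 p := by
        have e : (a, b) - ((0 : ℝ), (0 : ℝ)) + (z - 0) • (1 / (p : ℝ), (0 : ℝ)) =
            (a, b) + z • (1 / (p : ℝ), (0 : ℝ)) := by
          simp [Prod.ext_iff]
        rwa [e]
      rw [← mem_shift] at h2
      have := (main2 a b z 0 0 0 hc).mpr h2
      exact this
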